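/- Let H be a 4-uniform linear hypergraph on n vertices with m edges, and suppose that every 4-uniform linear hypergraph H' satisfies τ(H') ≤ (n(H') + m(H'))/5. Then τ(H) ≤ n/4 + m/6. -/

import Mathlib

structure FinHypergraph (α : Type) where
  verts : Finset α
  edges : Finset (Finset α)
deriving DecidableEq

namespace FinHypergraph

variable {α : Type} [DecidableEq α]

/-- All edges are subsets of the vertex set. -/
def Wellformed (H : FinHypergraph α) : Prop := ∀ e ∈ H.edges, e ⊆ H.verts

/-- Every edge has exactly `k` vertices. -/
def Uniform (H : FinHypergraph α) (k : ℕ) : Prop := ∀ e ∈ H.edges, e.card = k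

/-- Any two distinct edges intersect in at most one vertex. -/
def Linear (H : FinHypergraph α) : Prop :=
  ∀ e ∈ H.edges, ∀ f ∈ H.edges, e ≠ f → (e ∩ f).card ≤ 1

/-- `T` is a transversal: a set of vertices meeting every edge. -/
def IsTransversal (H : FinHypergraph α) (T : Finset α) : Prop :=
  T ⊆ H.verts ∧ ∀ e ∈ H.edges, (T ∩ e).Nonempty

/-- The transversal number: minimum size of a transversal. -/
noncomputable def tau (H : FinHypergraph α) : ℕ :=
  sInf {n : ℕ | ∃ T : Finset α, H.IsTransversal T ∧ T.card = n}

/-- The degree of a vertex: the number of edges containing it. -/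
def degree (H : FinHypergraph α) (v : α) : ℕ := (H.edges.filter (fun e => v ∈ e)).card

/-- Every vertex lies in exactly `r` edges. -/
def Regular (H : FinHypergraph α) (r : ℕ) : Prop := ∀ v ∈ H.verts, H.degree v = r

/-- Delete a set `X` of vertices together with all edges meeting `X`. -/
def delete (H : FinHypergraph α) (X : Finset α) : FinHypergraph α :=
  ⟨H.verts \ X, H.edges.filter (fun e => ∀ x ∈ X, x ∉ e)⟩

end FinHypergraph

namespace FinHypergraph

variable {α : Type} [DecidableEq α]

lemma tau_le_card {H : FinHypergraph α} {T : Finset α} (h : H.IsTransversal T) :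
    H.tau ≤ T.card := Nat.sInf_le ⟨T, h, rfl⟩

lemma exists_min_transversal (H : FinHypergraph α) (hw : H.Wellformed)
    (hne : ∀ e ∈ H.edges, e.Nonempty) :
    ∃ T, H.IsTransversal T ∧ T.card = H.tau := by
  have h : H.verts.card ∈ {n : ℕ | ∃ T : Finset α, H.IsTransversal T ∧ T.card = n} := by
    refine ⟨H.verts, ⟨subset_rfl, fun e he => ?_⟩, rfl⟩
    obtain ⟨x, hx⟩ := hne e he
    exact ⟨x, Finset.mem_inter.2 ⟨hw e he hx, hx⟩⟩
  exact Nat.sInf_mem ⟨_, h⟩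

lemma handshake (H : FinHypergraph α) (hw : H.Wellformed) :
    ∑ v ∈ H.verts, H.degree v = ∑ e ∈ H.edges, e.card := by
  unfold degree
  simp only [Finset.card_filter]
  rw [Finset.sum_comm]
  refine Finset.sum_congr rfl fun e he => ?_
  rw [← Finset.card_filter, Finset.filter_mem_eq_inter,
    Finset.inter_eq_right.2 (hw e he)]

lemma edges_delete_single (H : FinHypergraph α) (v : α) :
    (H.delete {v}).edges = H.edges.filter (fun e => v ∉ e) := by
  unfold delete
  simp

lemma key (hyp : ∀ H' : FinHypergraph α, H'.Wellformed → H'.Uniform 4 → H'.Linear →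
      (H'.tau : ℚ) ≤ ((H'.verts.card : ℚ) + (H'.edges.card : ℚ)) / 5) :
    ∀ n (H : FinHypergraph α), H.verts.card ≤ n → H.Wellformed → H.Uniform 4 → H.Linear →
      (H.tau : ℚ) ≤ (H.verts.card : ℚ) / 4 + (H.edges.card : ℚ) / 6 := by
  intro n
  induction n with
  | zero =>
    intro H hcard hw hu hl
    have hv : H.verts = ∅ := Finset.card_eq_zero.1 (Nat.le_zero.1 hcard)
    have he : H.edges = ∅ := by
      by_contra h
      obtain ⟨e, heE⟩ := Finset.nonempty_iff_ne_empty.2 h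
      have h4 := hu e heE
      have h0 : e = ∅ := Finset.subset_empty.1 (hv ▸ hw e heE)
      rw [h0] at h4; simp at h4
    have htau : H.tau ≤ (∅ : Finset α).card :=
      tau_le_card ⟨Finset.empty_subset _, fun e hee => by simp [he] at hee⟩
    simp only [Finset.card_empty, Nat.le_zero] at htau
    simp [htau, hv, he]
  | succ n ih =>
    intro H hcard hw hu hl
    have hne : ∀ e ∈ H.edges, e.Nonempty := fun e he =>
      Finset.card_pos.1 (by rw [hu e he]; norm_num)
    by_cases hdeg : ∃ v, 7 ≤ H.degree v
    · obtain ⟨v, hv7⟩ := hdeg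
      have hvV : v ∈ H.verts := by
        have hpos : (H.edges.filter (fun e => v ∈ e)).Nonempty := by
          rw [← Finset.card_pos]; unfold degree at hv7; omega
        obtain ⟨e, he⟩ := hpos
        rw [Finset.mem_filter] at he
        exact hw e he.1 he.2
      set H' := H.delete {v} with hH'
      have hE' : H'.edges = H.edges.filter (fun e => v ∉ e) := edges_delete_single H v
      have hw' : H'.Wellformed := by
        intro e he
        rw [hE', Finset.mem_filter] at he
        intro x hx
        simp only [hH', delete, Finset.mem_sdiff, Finset.mem_singleton]
        exact ⟨hw e he.1 hx, fun h => he.2 (h ▸ hx)⟩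
      have hu' : H'.Uniform 4 := fun e he => hu e (Finset.mem_filter.1 (hE' ▸ he)).1
      have hl' : H'.Linear := fun e he f hf hef =>
        hl e (Finset.mem_filter.1 (hE' ▸ he)).1 f (Finset.mem_filter.1 (hE' ▸ hf)).1 hef
      have hVcard : H'.verts.card = H.verts.card - 1 := by
        simp only [hH', delete, Finset.sdiff_singleton_eq_erase]
        exact Finset.card_erase_of_mem hvV
      have hEcard : H.degree v + H'.edges.card = H.edges.card := by
        rw [hE']
        exact Finset.card_filter_add_card_filter_not (p := fun e => v ∈ e)
      -- τ(H) ≤ τ(H') + 1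
      obtain ⟨T', hT', hT'card⟩ := exists_min_transversal H' hw'
        (fun e he => Finset.card_pos.1 (by rw [hu' e he]; norm_num))
      have htau : H.tau ≤ H'.tau + 1 := by
        have hst : H.IsTransversal (insert v T') := by
          constructor
          · exact Finset.insert_subset hvV (hT'.1.trans (Finset.sdiff_subset))
          · intro e he
            by_cases hve : v ∈ e
            · exact ⟨v, Finset.mem_inter.2 ⟨Finset.mem_insert_self _ _, hve⟩⟩
            · have heE' : e ∈ H'.edges := by rw [hE', Finset.mem_filter]; exact ⟨he, hve⟩
              obtain ⟨x, hx⟩ := hT'.2 e heE'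
              rw [Finset.mem_inter] at hx
              exact ⟨x, Finset.mem_inter.2 ⟨Finset.mem_insert_of_mem hx.1, hx.2⟩⟩
        calc H.tau ≤ (insert v T').card := tau_le_card hst
          _ ≤ T'.card + 1 := Finset.card_insert_le _ _
          _ = H'.tau + 1 := by rw [hT'card]
      have hIH := ih H' (by omega) hw' hu' hl'
      have hn1 : 1 ≤ H.verts.card := Finset.card_pos.2 ⟨v, hvV⟩
      have hq1 : (H'.verts.card : ℚ) = (H.verts.card : ℚ) - 1 := by
        rw [hVcard]; push_cast [Nat.cast_sub hn1]; ring
      have hq2 : (H.degree v : ℚ) + (H'.edges.card : ℚ) = (H.edges.card : ℚ) := by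
        exact_mod_cast hEcard
      have hq3 : (7 : ℚ) ≤ (H.degree v : ℚ) := by exact_mod_cast hv7
      have hq4 : (H.tau : ℚ) ≤ (H'.tau : ℚ) + 1 := by exact_mod_cast htau
      rw [hq1] at hIH
      linarith
    · push_neg at hdeg
      have hsum : ∑ v ∈ H.verts, H.degree v = 4 * H.edges.card := by
        rw [handshake H hw]
        rw [Finset.sum_congr rfl hu, Finset.sum_const, smul_eq_mul, Nat.mul_comm]
      have hle : ∑ v ∈ H.verts, H.degree v ≤ 6 * H.verts.card := by
        calc ∑ v ∈ H.verts, H.degree v ≤ ∑ _v ∈ H.verts, 6 :=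
              Finset.sum_le_sum (fun v _ => Nat.lt_succ_iff.1 (hdeg v))
          _ = 6 * H.verts.card := by rw [Finset.sum_const, smul_eq_mul, Nat.mul_comm]
      have h46 : 4 * H.edges.card ≤ 6 * H.verts.card := hsum ▸ hle
      have hq : (4 : ℚ) * (H.edges.card : ℚ) ≤ 6 * (H.verts.card : ℚ) := by exact_mod_cast h46
      have := hyp H hw hu hl
      linarith

end FinHypergraph

/-- If every 4-uniform linear hypergraph `H'` satisfies `τ(H') ≤ (n(H') + m(H'))/5`,
then every 4-uniform linear hypergraph `H` on `n` vertices with `m` edges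
satisfies `τ(H) ≤ n/4 + m/6`. -/
theorem stmt4 {α : Type} [DecidableEq α] (H : FinHypergraph α)
    (hw : H.Wellformed) (hu : H.Uniform 4) (hl : H.Linear)
    (hyp : ∀ H' : FinHypergraph α, H'.Wellformed → H'.Uniform 4 → H'.Linear →
      (H'.tau : ℚ) ≤ ((H'.verts.card : ℚ) + (H'.edges.card : ℚ)) / 5) :
    (H.tau : ℚ) ≤ (H.verts.card : ℚ) / 4 + (H.edges.card : ℚ) / 6 :=
  FinHypergraph.key hyp H.verts.card H le_rfl hw hu hl
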